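/- Let r be a rational function of degree N, α ∈ Ω(r) with distinct preimages w_1, …, w_N, and let F be a ℂ^N-valued function analytic in a neighborhood of α. If f(z) = Z_r(z) F(r(z)), then (R^{(r)}_α f)(z) = Z_r(z) (R_α F)(r(z)), where (R_α F)(λ) = (F(λ) − F(α))/(λ − α) is the classical backward-shift operator. -/

import Mathlib

open Polynomial

noncomputable section

/-- The rational function `r = p/q`, evaluated pointwise. -/
def ratEval (p q : Polynomial ℂ) (z : ℂ) : ℂ := p.eval z / q.eval z

/-- The difference quotient `z ↦ (r(z) − r(a))/(z − a)` (equal to `r′(a)` at `z = a`). -/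
def dq (p q : Polynomial ℂ) (a : ℂ) : ℂ → ℂ :=
  fun z => if z = a then deriv (ratEval p q) a
           else (ratEval p q z - ratEval p q a) / (z - a)

/-- The state space `𝔏(r)`: the span of the difference quotients of `r = p/q`. -/
def stateSpace (p q : Polynomial ℂ) : Submodule ℂ (ℂ → ℂ) :=
  Submodule.span ℂ {f | ∃ a : ℂ, q.eval a ≠ 0 ∧ f = dq p q a}

lemma deriv_ratEval (p q : Polynomial ℂ) (a : ℂ) (ha : q.eval a ≠ 0) :
    deriv (ratEval p q) a =
      ((derivative p).eval a * q.eval a - p.eval a * (derivative q).eval a) / (q.eval a)^2 := by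
  have : ratEval p q = fun z => p.eval z / q.eval z := rfl
  rw [this, deriv_fun_div (p.differentiableAt) (q.differentiableAt) ha,
    Polynomial.deriv, Polynomial.deriv]

def vpoly (p q : Polynomial ℂ) (a : ℂ) : Polynomial ℂ :=
  (p * C (q.eval a) - C (p.eval a) * q) /ₘ (X - C a)

lemma vpoly_mul (p q : Polynomial ℂ) (a : ℂ) :
    (X - C a) * vpoly p q a = p * C (q.eval a) - C (p.eval a) * q := by
  rw [vpoly, mul_divByMonic_eq_iff_isRoot]
  simp [IsRoot, mul_comm]

lemma vpoly_eval (p q : Polynomial ℂ) (a z : ℂ) :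
    (z - a) * (vpoly p q a).eval z = p.eval z * q.eval a - p.eval a * q.eval z := by
  have := congrArg (Polynomial.eval z) (vpoly_mul p q a)
  simpa using this

lemma vpoly_eval_self (p q : Polynomial ℂ) (a : ℂ) :
    (vpoly p q a).eval a = (derivative p).eval a * q.eval a - p.eval a * (derivative q).eval a := by
  have := congrArg (fun u => Polynomial.eval a (derivative u)) (vpoly_mul p q a)
  simp only [derivative_mul, derivative_sub, derivative_X, derivative_C, sub_zero, one_mul,
    eval_add, eval_mul, eval_sub, eval_X, eval_C, sub_self, zero_mul, zero_add, mul_zero] at this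
  simpa using this

lemma dq_eq (p q : Polynomial ℂ) (a z : ℂ) (ha : q.eval a ≠ 0) (hz : q.eval z ≠ 0) :
    dq p q a z = (vpoly p q a).eval z / (q.eval a * q.eval z) := by
  rw [dq]
  split_ifs with h
  · subst h
    rw [deriv_ratEval p q z ha, ← vpoly_eval_self]
    ring_nf
  · have hza : z - a ≠ 0 := sub_ne_zero.mpr h
    rw [ratEval, ratEval, div_sub_div _ _ hz ha, div_div]
    have hv := vpoly_eval p q a z
    rw [div_eq_div_iff (mul_ne_zero (mul_ne_zero hz ha) hza) (mul_ne_zero ha hz)]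
    linear_combination (-(q.eval a) * q.eval z) * hv

lemma vpoly_degree (p q : Polynomial ℂ) (a : ℂ) (N : ℕ) (hp : p.natDegree = N)
    (hq : q.natDegree ≤ N) : (vpoly p q a).degree < (N : WithBot ℕ) := by
  have hv := vpoly_mul p q a
  set v := vpoly p q a
  by_cases h0 : v = 0
  · simp [h0]
  · rw [← natDegree_lt_iff_degree_lt h0, ← Nat.add_one_le_iff]
    have hnum : (p * C (q.eval a) - C (p.eval a) * q).natDegree ≤ N := by
      refine (natDegree_sub_le _ _).trans (max_le ?_ ?_)
      · exact (natDegree_mul_le).trans (by simp [hp])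
      · exact (natDegree_mul_le).trans (by simp [hq])
    have : ((X - C a) * v).natDegree = 1 + v.natDegree := by
      rw [natDegree_mul (X_sub_C_ne_zero a) h0, natDegree_X_sub_C]
    rw [hv] at this
    omega

lemma lagrange_eval {N : ℕ} (w : Fin N → ℂ) (hw : Function.Injective w)
    (u : Polynomial ℂ) (hu : u.degree < (N : WithBot ℕ)) (z : ℂ) :
    u.eval z = ∑ n : Fin N, u.eval (w n) *
      ∏ m ∈ Finset.univ.erase n, ((w n - w m)⁻¹ * (z - w m)) := by
  have hinj : Set.InjOn w (Finset.univ : Finset (Fin N)) := fun a _ b _ h => hw h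
  have hdeg : u.degree < ((Finset.univ : Finset (Fin N)).card : WithBot ℕ) := by
    simpa using hu
  conv_lhs => rw [Lagrange.eq_interpolate hinj hdeg]
  rw [Lagrange.interpolate_apply, eval_finset_sum]
  refine Finset.sum_congr rfl fun n _ => ?_
  rw [eval_mul, eval_C, Lagrange.basis, eval_prod]
  refine congrArg _ (Finset.prod_congr rfl fun m _ => ?_)
  simp [Lagrange.basisDivisor]

lemma partial_fractions {N : ℕ} (w : Fin N → ℂ) (hw : Function.Injective w)
    (u : Polynomial ℂ) (hu : u.degree < (N : WithBot ℕ)) (c : ℂ) (hc : c ≠ 0)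
    (z : ℂ) (hz : ∀ n, z ≠ w n) :
    u.eval z / (c * ∏ n : Fin N, (z - w n))
      = ∑ n : Fin N, u.eval (w n) /
          ((c * ∏ m ∈ Finset.univ.erase n, (w n - w m)) * (z - w n)) := by
  rw [lagrange_eval w hw u hu z, Finset.sum_div]
  refine Finset.sum_congr rfl fun n _ => ?_
  have hA : (∏ m ∈ Finset.univ.erase n, (z - w m)) ≠ 0 := by
    rw [Finset.prod_ne_zero_iff]
    exact fun m _ => sub_ne_zero.mpr (hz m)
  have hB : (∏ m ∈ Finset.univ.erase n, (w n - w m)) ≠ 0 := by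
    rw [Finset.prod_ne_zero_iff]
    intro m hm
    exact sub_ne_zero.mpr fun h => (Finset.mem_erase.mp hm).1 (hw h.symm)
  have hzn : z - w n ≠ 0 := sub_ne_zero.mpr (hz n)
  rw [← Finset.mul_prod_erase _ _ (Finset.mem_univ n), Finset.prod_mul_distrib]
  rw [show (∏ x ∈ Finset.univ.erase n, (w n - w x)⁻¹) = (∏ x ∈ Finset.univ.erase n, (w n - w x))⁻¹ from
    Finset.prod_inv_distrib _]
  field_simp

lemma deriv_prod_eval {N : ℕ} (w : Fin N → ℂ) (n : Fin N) :
    (derivative (∏ m : Fin N, (X - C (w m)))).eval (w n)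
      = ∏ m ∈ Finset.univ.erase n, (w n - w m) := by
  rw [← Finset.mul_prod_erase _ _ (Finset.mem_univ n), derivative_mul]
  simp [eval_prod]

lemma s_factor {N : ℕ} (s : Polynomial ℂ) (hs : s ≠ 0) (hdeg : s.natDegree ≤ N)
    (w : Fin N → ℂ) (hw : Function.Injective w) (hroot : ∀ n, s.eval (w n) = 0) :
    ∃ c : ℂ, c ≠ 0 ∧ s = C c * ∏ n : Fin N, (X - C (w n)) := by
  have ht : (∏ n : Fin N, (X - C (w n))) ∣ s :=
    Fintype.prod_dvd_of_coprime (pairwise_coprime_X_sub_C hw)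
      (fun n => dvd_iff_isRoot.mpr (hroot n))
  obtain ⟨k, hk⟩ := ht
  have ht0 : (∏ n : Fin N, (X - C (w n))) ≠ 0 := by
    rw [Finset.prod_ne_zero_iff]; exact fun n _ => X_sub_C_ne_zero (w n)
  have hk0 : k ≠ 0 := fun h => hs (by simp [hk, h])
  have htdeg : (∏ n : Fin N, (X - C (w n))).natDegree = N := by
    rw [natDegree_prod _ _ (fun n _ => X_sub_C_ne_zero (w n))]
    simp
  have hkdeg : k.natDegree = 0 := by
    have := natDegree_mul ht0 hk0
    rw [← hk, htdeg] at this
    omega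
  refine ⟨k.coeff 0, fun h => hk0 (by rw [eq_C_of_natDegree_eq_zero hkdeg, h, map_zero]), ?_⟩
  conv_lhs => rw [hk, eq_C_of_natDegree_eq_zero hkdeg, mul_comm]

lemma key {N : ℕ} (p q : Polynomial ℂ) (hN : p.natDegree = N)
    (hdeg : q.natDegree ≤ p.natDegree) (α : ℂ) (hs0 : p - C α * q ≠ 0)
    (w : Fin N → ℂ) (hw : Function.Injective w)
    (hroot : ∀ n, p.eval (w n) = α * q.eval (w n)) (hq : ∀ n, q.eval (w n) ≠ 0)
    (g : ℂ → ℂ) (hg : g ∈ stateSpace p q)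
    (z : ℂ) (hz : q.eval z ≠ 0) (hzα : ratEval p q z ≠ α) :
    g z / (ratEval p q z - α)
      = ∑ n : Fin N, g (w n) / (deriv (ratEval p q) (w n) * (z - w n)) := by
  set s : Polynomial ℂ := p - C α * q with hs
  have hsdeg : s.natDegree ≤ N := by
    refine (natDegree_sub_le _ _).trans (max_le (le_of_eq hN) ?_)
    exact (natDegree_mul_le).trans (by simpa using hdeg.trans_eq hN)
  have hswn : ∀ n, s.eval (w n) = 0 := by
    intro n
    simp [hs, hroot n]
  obtain ⟨c, hc, hsc⟩ := s_factor s hs0 hsdeg w hw hswn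
  have hsz : s.eval z ≠ 0 := by
    intro h
    apply hzα
    have hpz : p.eval z = α * q.eval z := by
      simpa [hs, sub_eq_zero] using h
    rw [ratEval, hpz, mul_div_assoc, div_self hz, mul_one]
  have hzw : ∀ n, z ≠ w n := fun n h => hsz (by rw [h, hswn n])
  have hrz : ratEval p q z - α = s.eval z / q.eval z := by
    rw [ratEval, hs, eval_sub, eval_mul, eval_C]
    field_simp
  have hprodz : (∏ n : Fin N, (z - w n)) ≠ 0 := by
    rw [Finset.prod_ne_zero_iff]
    exact fun n _ => sub_ne_zero.mpr (hzw n)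
  have hDn : ∀ n : Fin N, (∏ m ∈ Finset.univ.erase n, (w n - w m)) ≠ 0 := by
    intro n
    rw [Finset.prod_ne_zero_iff]
    intro m hm
    exact sub_ne_zero.mpr fun h => (Finset.mem_erase.mp hm).1 (hw h.symm)
  have seval : s.eval z = c * ∏ n : Fin N, (z - w n) := by
    rw [hsc]
    simp [eval_prod]
  have hderiv : ∀ n, deriv (ratEval p q) (w n)
      = c * (∏ m ∈ Finset.univ.erase n, (w n - w m)) / q.eval (w n) := by
    intro n
    rw [deriv_ratEval p q _ (hq n)]
    have h1 : (derivative s).eval (w n)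
        = (derivative p).eval (w n) - α * (derivative q).eval (w n) := by
      simp [hs]
    have h2 : (derivative s).eval (w n) = c * ∏ m ∈ Finset.univ.erase n, (w n - w m) := by
      rw [hsc, derivative_mul, derivative_C, zero_mul, zero_add, eval_mul, eval_C,
        deriv_prod_eval]
    rw [div_eq_div_iff (pow_ne_zero 2 (hq n)) (hq n)]
    linear_combination (-(eval (w n) (derivative q)) * eval (w n) q) * hroot n
      + (eval (w n) q)^2 * h2 - (eval (w n) q)^2 * h1
  have hg' : g ∈ Submodule.span ℂ {f : ℂ → ℂ | ∃ a : ℂ, q.eval a ≠ 0 ∧ f = dq p q a} := hg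
  clear hg
  induction hg' using Submodule.span_induction with
  | mem g hgen =>
    obtain ⟨a, ha, rfl⟩ := hgen
    have hvdeg := vpoly_degree p q a N hN (hdeg.trans_eq hN)
    have pf := partial_fractions w hw (vpoly p q a) hvdeg c hc z hzw
    have e1 : ((vpoly p q a).eval z / (q.eval a * q.eval z)) / (s.eval z / q.eval z)
        = (q.eval a)⁻¹ * ((vpoly p q a).eval z / (c * ∏ n : Fin N, (z - w n))) := by
      rw [seval]
      field_simp
    rw [dq_eq p q a z ha hz, hrz, e1, pf, Finset.mul_sum]
    refine Finset.sum_congr rfl fun n _ => ?_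
    rw [dq_eq p q a (w n) ha (hq n), hderiv n]
    have hzn : z - w n ≠ 0 := sub_ne_zero.mpr (hzw n)
    have hqn := hq n
    have hDnn := hDn n
    field_simp
  | zero => simp
  | add g h _ _ ihg ihh =>
    simp only [Pi.add_apply, add_div, Finset.sum_add_distrib]
    rw [ihg, ihh]
  | smul a g _ ih =>
    simp only [Pi.smul_apply, smul_eq_mul, mul_div_assoc]
    rw [ih, Finset.mul_sum]

/-- The generalized backward-shift operator `R^{(r)}_α`. -/
def Rop (p q : Polynomial ℂ) (α : ℂ) {N : ℕ} (w : Fin N → ℂ) (f : ℂ → ℂ) : ℂ → ℂ :=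
  fun z => f z / (ratEval p q z - α)
    - ∑ n : Fin N, f (w n) / (deriv (ratEval p q) (w n) * (z - w n))

/-- if `f(z) = Z_r(z) F(r(z))` with `F` analytic near `α ∈ Ω(r)`,
then `(R^{(r)}_α f)(z) = Z_r(z) (R_α F)(r(z))`, where
`(R_α F)(λ) = (F(λ) − F(α))/(λ − α)` is the classical backward-shift. -/
theorem stmt9 (p q : Polynomial ℂ) (hco : IsCoprime p q) (N : ℕ)
    (hN : p.natDegree = N) (hdeg : q.natDegree ≤ p.natDegree)
    (e : Fin N → (ℂ → ℂ)) (hmem : ∀ n, e n ∈ stateSpace p q)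
    (hli : LinearIndependent ℂ e)
    (hspan : Submodule.span ℂ (Set.range e) = stateSpace p q)
    (α : ℂ) (w : Fin N → ℂ) (hw : Function.Injective w)
    (hroot : ∀ n, p.eval (w n) = α * q.eval (w n)) (hq : ∀ n, q.eval (w n) ≠ 0)
    (F : Fin N → ℂ → ℂ) (hF : ∀ n, AnalyticAt ℂ (F n) α)
    (f : ℂ → ℂ) (hf : ∀ z, f z = ∑ n : Fin N, e n z * F n (ratEval p q z)) :
    ∀ z : ℂ, q.eval z ≠ 0 → ratEval p q z ≠ α →
      Rop p q α w f z
        = ∑ n : Fin N, e n z *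
            ((F n (ratEval p q z) - F n α) / (ratEval p q z - α)) := by
  intro z hz hzα
  by_cases hN0 : N = 0
  · subst hN0
    have hfz : f z = 0 := by rw [hf z]; simp
    simp [Rop, hfz]
  · have hN1 : 0 < N := Nat.pos_of_ne_zero hN0
    have hs0 : p - C α * q ≠ 0 := by
      intro h
      have hpq : p = C α * q := by rwa [sub_eq_zero] at h
      have hu : IsUnit q := hco.isUnit_of_dvd' ⟨C α, by rw [hpq]; ring⟩ dvd_rfl
      have hq0 : q.natDegree = 0 := natDegree_eq_zero_of_isUnit hu
      have : p.natDegree ≤ 0 := by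
        rw [hpq]
        exact natDegree_mul_le.trans (by simp [hq0])
      omega
    have hrwn : ∀ n, ratEval p q (w n) = α := by
      intro n
      rw [ratEval, hroot n, mul_div_assoc, div_self (hq n), mul_one]
    have hkey : ∀ n : Fin N, e n z / (ratEval p q z - α)
        = ∑ m : Fin N, e n (w m) / (deriv (ratEval p q) (w m) * (z - w m)) :=
      fun n => key p q hN hdeg α hs0 w hw hroot hq (e n) (hmem n) z hz hzα
    have hfw : ∀ m, f (w m) = ∑ n : Fin N, e n (w m) * F n α := by
      intro m
      rw [hf (w m)]
      exact Finset.sum_congr rfl fun n _ => by rw [hrwn m]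
    rw [Rop]
    have h2 : ∑ m : Fin N, f (w m) / (deriv (ratEval p q) (w m) * (z - w m))
        = ∑ n : Fin N, F n α * (e n z / (ratEval p q z - α)) := by
      have hterm : ∀ m, f (w m) / (deriv (ratEval p q) (w m) * (z - w m))
          = ∑ n : Fin N, (e n (w m) * F n α) / (deriv (ratEval p q) (w m) * (z - w m)) := by
        intro m
        rw [hfw m, Finset.sum_div]
      rw [Finset.sum_congr rfl (fun m _ => hterm m), Finset.sum_comm]
      refine Finset.sum_congr rfl fun n _ => ?_
      rw [hkey n, Finset.mul_sum]
      exact Finset.sum_congr rfl fun m _ => by ring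
    rw [hf z, Finset.sum_div, h2, ← Finset.sum_sub_distrib]
    exact Finset.sum_congr rfl fun n _ => by ring


end
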